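/- Let q : ℕ → ℝ be a sequence of nonnegative reals with q₁ = h ∈ [0,a] (a the real root of a^3+2a^2+3a-2 = 0) satisfying q_k ≤ N_{k-1} q_{k-1}^2 for k ≥ 2, where N_j = 1 + (1+q_j)^2/2. Then for every k ≥ 1, N_k q_k ≤ 1, and both sequences (q_k) and (N_k) are nonincreasing. -/
import Mathlib

lemma key_Nq (a x : ℝ) (ha : a ^ 3 + 2 * a ^ 2 + 3 * a - 2 = 0)
    (hx0 : 0 ≤ x) (hxa : x ≤ a) : (1 + (1 + x) ^ 2 / 2) * x ≤ 1 := by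
  nlinarith [sq_nonneg (a - x), sq_nonneg (a + x), mul_nonneg hx0 hx0,
    mul_nonneg (mul_nonneg hx0 hx0) hx0, sq_nonneg x]

theorem Nq_le_one_and_monotone (a : ℝ) (ha : a ^ 3 + 2 * a ^ 2 + 3 * a - 2 = 0)
    (ha1 : (0.477 : ℝ) < a) (ha2 : a < 0.478)
    (h : ℝ) (hh0 : 0 ≤ h) (hha : h ≤ a)
    (q : ℕ → ℝ) (hqpos : ∀ k, 0 ≤ q k) (hq1 : q 1 = h)
    (hrec : ∀ k, 2 ≤ k → q k ≤ (1 + (1 + q (k - 1)) ^ 2 / 2) * q (k - 1) ^ 2) :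
    (∀ k, 1 ≤ k → (1 + (1 + q k) ^ 2 / 2) * q k ≤ 1) ∧
      (∀ k, 1 ≤ k → q (k + 1) ≤ q k) ∧
      (∀ k, 1 ≤ k → 1 + (1 + q (k + 1)) ^ 2 / 2 ≤ 1 + (1 + q k) ^ 2 / 2) := by
  have hle : ∀ k, 1 ≤ k → q k ≤ a := by
    intro k hk
    induction k, hk using Nat.le_induction with
    | base => rw [hq1]; exact hha
    | succ k hk ih =>
      have h2 : 2 ≤ k + 1 := by omega
      have hr := hrec (k + 1) h2
      simp only [Nat.add_sub_cancel] at hr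
      have hkey := key_Nq a (q k) ha (hqpos k) ih
      calc q (k + 1) ≤ (1 + (1 + q k) ^ 2 / 2) * q k ^ 2 := hr
        _ = ((1 + (1 + q k) ^ 2 / 2) * q k) * q k := by ring
        _ ≤ 1 * q k := mul_le_mul_of_nonneg_right hkey (hqpos k)
        _ = q k := one_mul _
        _ ≤ a := ih
  have hmono : ∀ k, 1 ≤ k → q (k + 1) ≤ q k := by
    intro k hk
    have hr := hrec (k + 1) (by omega)
    simp only [Nat.add_sub_cancel] at hr
    have hkey := key_Nq a (q k) ha (hqpos k) (hle k hk)
    calc q (k + 1) ≤ (1 + (1 + q k) ^ 2 / 2) * q k ^ 2 := hr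
      _ = ((1 + (1 + q k) ^ 2 / 2) * q k) * q k := by ring
      _ ≤ 1 * q k := mul_le_mul_of_nonneg_right hkey (hqpos k)
      _ = q k := one_mul _
  refine ⟨fun k hk => key_Nq a (q k) ha (hqpos k) (hle k hk), hmono, fun k hk => ?_⟩
  have := hmono k hk
  have h1 := hqpos k
  have h2 := hqpos (k + 1)
  nlinarith
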